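/- Let Φ = (φ_ij) ∈ H^∞(𝕋, M_{m×n}) be a matrix-valued function that is rational in the sense that θ H^2(𝕋, ℂ^m) ⊆ ker H_{Φ*} for some finite Blaschke product θ. Then each entry can be written φ_ij = θ · conj(a_ij) with a_ij ∈ H^∞(𝕋); in particular each entry φ_ij is a rational function (the boundary value of a rational function of z). -/

import Mathlib

open MeasureTheory Complex

noncomputable section

/-- Normalized arc-length (Haar) measure on the unit circle `𝕋`, realized as a
measure on `ℂ` supported on the unit circle. -/
def mT : Measure ℂ :=
  Measure.map (fun t : ℝ => Complex.exp (t * Complex.I))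
    ((ENNReal.ofReal (2 * Real.pi))⁻¹ • volume.restrict (Set.Ioc 0 (2 * Real.pi)))

variable {D E E' : Type*}
  [NormedAddCommGroup D] [InnerProductSpace ℂ D] [CompleteSpace D]
  [NormedAddCommGroup E] [InnerProductSpace ℂ E] [CompleteSpace E]
  [NormedAddCommGroup E'] [InnerProductSpace ℂ E'] [CompleteSpace E']

/-- The `n`-th Fourier coefficient `Φ̂(n)x = ∫_𝕋 z̄ⁿ Φ(z)x dm(z)` of an
operator-valued function, applied to the vector `x`. -/
def fc (Φ : ℂ → D →L[ℂ] E) (n : ℤ) (x : D) : E :=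
  ∫ z, ((starRingEnd ℂ) z) ^ n • (Φ z x) ∂mT

/-- Membership in `H^∞(𝕋, B(D,E))`: SOT-measurable, essentially bounded in operator
norm, with vanishing negative Fourier coefficients. -/
structure MemHinf (Φ : ℂ → D →L[ℂ] E) : Prop where
  meas : ∀ x : D, AEStronglyMeasurable (fun z => Φ z x) mT
  bdd : ∃ r : ℝ, ∀ᵐ z ∂mT, ‖Φ z‖ ≤ r
  neg : ∀ n : ℤ, n < 0 → ∀ x : D, fc Φ n x = 0

/-- An inner function: `Φ ∈ H^∞` with `Φ(z)*Φ(z) = I` a.e. -/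
def IsInnerFn (Φ : ℂ → D →L[ℂ] E) : Prop :=
  MemHinf Φ ∧ ∀ᵐ z ∂mT,
    (ContinuousLinearMap.adjoint (Φ z)).comp (Φ z) = ContinuousLinearMap.id ℂ D

/-- A two-sided inner function: inner and `Φ(z)Φ(z)* = I` a.e. -/
def IsTwoSidedInner (Φ : ℂ → D →L[ℂ] E) : Prop :=
  IsInnerFn Φ ∧ ∀ᵐ z ∂mT,
    (Φ z).comp (ContinuousLinearMap.adjoint (Φ z)) = ContinuousLinearMap.id ℂ E

/-- `Θ` is a left inner divisor of `Φ`: `Θ` is inner and `Φ = Θ A` for some `A ∈ H^∞`. -/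
def IsLeftInnerDiv (Θ : ℂ → E' →L[ℂ] E) (Φ : ℂ → D →L[ℂ] E) : Prop :=
  IsInnerFn Θ ∧ ∃ A : ℂ → D →L[ℂ] E', MemHinf A ∧ ∀ᵐ z ∂mT, Φ z = (Θ z).comp (A z)

/-- `Ω` is a right inner divisor of `Φ`: `Ω` is inner and `Φ = B Ω` for some `B ∈ H^∞`. -/
def IsRightInnerDiv (Ω : ℂ → D →L[ℂ] E') (Φ : ℂ → D →L[ℂ] E) : Prop :=
  IsInnerFn Ω ∧ ∃ B : ℂ → E' →L[ℂ] E, MemHinf B ∧ ∀ᵐ z ∂mT, Φ z = (B z).comp (Ω z)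

/-- `Δ` is an inner divisor of `Φ`: both a left and a right inner divisor. -/
def IsInnerDiv (Δ Φ : ℂ → E →L[ℂ] E) : Prop :=
  IsLeftInnerDiv Δ Φ ∧ IsRightInnerDiv Δ Φ

/-- A unitary operator between Hilbert spaces. -/
def IsUnitaryOp (U : D →L[ℂ] E) : Prop :=
  (ContinuousLinearMap.adjoint U).comp U = ContinuousLinearMap.id ℂ D ∧
    U.comp (ContinuousLinearMap.adjoint U) = ContinuousLinearMap.id ℂ E

/-- An orthogonal projection: idempotent and self-adjoint. -/
def IsOrthoProj (P : E →L[ℂ] E) : Prop :=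
  P.comp P = P ∧ ContinuousLinearMap.adjoint P = P

/-- A partial isometry: `T T* T = T`. -/
def IsPartialIsom (T : D →L[ℂ] E) : Prop :=
  (T.comp (ContinuousLinearMap.adjoint T)).comp T = T

/-- The Blaschke factor `b_α(z) = (z - α)/(1 - ᾱ z)`. -/
def blaschke (α z : ℂ) : ℂ := (z - α) / (1 - (starRingEnd ℂ) α * z)

/-- The Poisson integral of `Φ ∈ H^∞` at `ζ ∈ 𝔻`, applied to the vector `x`:
`P[Φ](ζ)x = Σ_{n ≥ 0} Φ̂(n)x ζⁿ`. -/
def poissonFn (Φ : ℂ → D →L[ℂ] E) (ζ : ℂ) (x : D) : E :=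
  ∑' n : ℕ, ζ ^ n • fc Φ (n : ℤ) x

/-- The `n`-th Fourier coefficient of a vector-valued function. -/
def vfc (f : ℂ → E) (n : ℤ) : E :=
  ∫ z, ((starRingEnd ℂ) z) ^ n • f z ∂mT

/-- Membership in `H²(𝕋, E)`: square Bochner-integrable with vanishing
negative Fourier coefficients. -/
def MemH2 (f : ℂ → E) : Prop :=
  MemLp f 2 mT ∧ ∀ n : ℤ, n < 0 → vfc f n = 0

/-- A finite Blaschke product `θ = ∏ b_{αₙ}` with all `αₙ ∈ 𝔻`. -/
def IsFiniteBlaschkeProd (θ : ℂ → ℂ) : Prop :=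
  ∃ (M : ℕ) (α : Fin M → ℂ), (∀ i, ‖α i‖ < 1) ∧ ∀ z, θ z = ∏ i, blaschke (α i) z

/-- `Φ ∈ H^∞(𝕋, B(D,E))` is rational: `θ H²(𝕋,E) ⊆ ker H_{Φ*}` for some finite
Blaschke product `θ`, where `ker H_{Φ*} = {f ∈ H²(𝕋,E) : Φ*f ∈ H²(𝕋,D)}`. -/
def IsRationalFn (Φ : ℂ → D →L[ℂ] E) : Prop :=
  ∃ θ : ℂ → ℂ, IsFiniteBlaschkeProd θ ∧
    ∀ f : ℂ → E, MemH2 f →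
      MemH2 (fun z => θ z • f z) ∧
      MemH2 (fun z => θ z • (ContinuousLinearMap.adjoint (Φ z)) (f z))

/-- A finite Blaschke-Potapov product
`Δ = V ∏ₘ (b_{αₘ} Pₘ + (I - Pₘ))` with `V` a constant unitary, `αₘ ∈ 𝔻` and
`Pₘ` orthogonal projections. -/
def IsBPProduct (Δ : ℂ → E →L[ℂ] E) : Prop :=
  ∃ (M : ℕ) (V : E →L[ℂ] E) (α : Fin M → ℂ) (P : Fin M → E →L[ℂ] E),
    IsUnitaryOp V ∧ (∀ i, ‖α i‖ < 1) ∧ (∀ i, IsOrthoProj (P i)) ∧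
    ∀ᵐ z ∂mT, Δ z = V * (List.ofFn fun i => blaschke (α i) z • P i + (1 - P i)).prod

/-- `Φ` and `Ψ` (with values in operators into the same space `E`) are left coprime:
every common left inner divisor is a constant unitary. -/
def LeftCoprime {D₁ D₂ : Type*}
    [NormedAddCommGroup D₁] [InnerProductSpace ℂ D₁] [CompleteSpace D₁]
    [NormedAddCommGroup D₂] [InnerProductSpace ℂ D₂] [CompleteSpace D₂]
    (Φ : ℂ → D₁ →L[ℂ] E) (Ψ : ℂ → D₂ →L[ℂ] E) : Prop :=
  ∀ (F : Type) (_ : NormedAddCommGroup F) (_ : InnerProductSpace ℂ F) (_ : CompleteSpace F)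
    (Θ : ℂ → F →L[ℂ] E), IsLeftInnerDiv Θ Φ → IsLeftInnerDiv Θ Ψ →
      ∃ U : F →L[ℂ] E, IsUnitaryOp U ∧ ∀ᵐ z ∂mT, Θ z = U


/-- Membership in scalar `H^∞(𝕋)`: measurable, essentially bounded, vanishing negative
Fourier coefficients. -/
def MemHinfScalar (a : ℂ → ℂ) : Prop :=
  AEStronglyMeasurable a mT ∧ (∃ r : ℝ, ∀ᵐ z ∂mT, ‖a z‖ ≤ r) ∧
    ∀ n : ℤ, n < 0 → (∫ z, ((starRingEnd ℂ) z) ^ n * a z ∂mT) = 0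

local instance fact_pi : Fact (0 < 2 * Real.pi) := ⟨by positivity⟩

def eC : AddCircle (2 * Real.pi) → ℂ := fun x => fourier 1 x

lemma eC_coe (t : ℝ) : eC (t : ℝ) = Complex.exp (t * Complex.I) := by
  have h2π : (2 * Real.pi : ℂ) ≠ 0 := by
    norm_num [Complex.ofReal_ne_zero, Real.pi_ne_zero]
  simp only [eC, fourier_coe_apply]
  congr 1
  push_cast
  field_simp

lemma eC_cont : Continuous eC := (fourier 1).continuous

lemma mT_eq_map : mT = Measure.map eC (AddCircle.haarAddCircle) := by
  have hmk := (AddCircle.measurePreserving_mk (2 * Real.pi) 0)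
  have hmkm : Measurable ((↑) : ℝ → AddCircle (2 * Real.pi)) := hmk.measurable
  have h1 : (fun t : ℝ => Complex.exp (t * Complex.I)) = eC ∘ ((↑) : ℝ → AddCircle (2 * Real.pi)) := by
    funext t; simp [Function.comp, eC_coe]
  have h2 := hmk.map_eq
  rw [zero_add] at h2
  rw [mT, h1, ← Measure.map_map eC_cont.measurable hmkm, Measure.map_smul, h2,
    AddCircle.volume_eq_smul_haarAddCircle, ← smul_assoc]
  have h3 : (ENNReal.ofReal (2 * Real.pi))⁻¹ • ENNReal.ofReal (2 * Real.pi) = (1 : ENNReal) := by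
    rw [smul_eq_mul, ENNReal.inv_mul_cancel]
    · simp [ENNReal.ofReal_eq_zero, Real.pi_pos]
    · exact ENNReal.ofReal_ne_top
  rw [h3, one_smul]

instance mT_prob : IsProbabilityMeasure mT := by
  rw [mT_eq_map]
  exact Measure.isProbabilityMeasure_map eC_cont.measurable.aemeasurable

lemma mT_ae_abs : ∀ᵐ z ∂mT, ‖z‖ = 1 := by
  rw [show mT = Measure.map (fun t : ℝ => Complex.exp (t * Complex.I))
    ((ENNReal.ofReal (2 * Real.pi))⁻¹ • volume.restrict (Set.Ioc 0 (2 * Real.pi))) from rfl]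
  rw [ae_map_iff (by fun_prop) (by
    exact (isClosed_eq continuous_norm continuous_const).measurableSet)]
  exact ae_of_all _ fun t => Complex.norm_exp_ofReal_mul_I t

lemma meas_zpow (n : ℤ) : Measurable (fun z : ℂ => z ^ n) := by measurability

lemma meas_conj_zpow (n : ℤ) : Measurable (fun z : ℂ => ((starRingEnd ℂ) z) ^ n) :=
  (meas_zpow n).comp Complex.continuous_conj.measurable

lemma fourier_eq_eC_zpow (k : ℤ) (x : AddCircle (2 * Real.pi)) :
    fourier k x = (eC x) ^ k := by
  induction x using QuotientAddGroup.induction_on with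
  | H t =>
    rw [eC_coe, fourier_coe_apply, ← Complex.exp_int_mul]
    congr 1
    have h2π : (2 * Real.pi : ℂ) ≠ 0 := by
      norm_num [Complex.ofReal_ne_zero, Real.pi_ne_zero]
    push_cast
    field_simp

lemma integral_conj_zpow (m : ℤ) :
    (∫ z, ((starRingEnd ℂ) z) ^ m ∂mT) = if m = 0 then 1 else 0 := by
  by_cases hm : m = 0
  · simp [hm]
  · simp only [hm, if_false]
    rw [show mT = Measure.map (fun t : ℝ => Complex.exp (t * Complex.I))
      ((ENNReal.ofReal (2 * Real.pi))⁻¹ • volume.restrict (Set.Ioc 0 (2 * Real.pi))) from rfl]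
    rw [integral_map (by fun_prop) (meas_conj_zpow m).aestronglyMeasurable]
    have hint : ∀ t : ℝ, ((starRingEnd ℂ) (Complex.exp (t * Complex.I))) ^ m
        = Complex.exp ((-(m:ℂ) * Complex.I) * t) := by
      intro t
      rw [← Complex.exp_conj]
      rw [← Complex.exp_int_mul]
      congr 1
      simp [Complex.conj_I]
      ring
    simp only [hint]
    rw [integral_smul_measure]
    have h1 : (∫ t in Set.Ioc 0 (2 * Real.pi), Complex.exp ((-(m:ℂ) * Complex.I) * t)) = 0 := by
      rw [← intervalIntegral.integral_of_le Real.two_pi_pos.le]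
      rw [integral_exp_mul_complex (by simp [Complex.I_ne_zero, hm])]
      have : (-(m:ℂ) * Complex.I) * (2 * Real.pi : ℝ) = (-m : ℤ) * (2 * Real.pi * Complex.I) := by
        push_cast; ring
      rw [this, Complex.exp_int_mul_two_pi_mul_I]
      simp
    rw [h1]
    simp

set_option maxHeartbeats 1000000 in
lemma mT_ext {g : ℂ → ℂ} (hg : MemLp g 2 mT)
    (h0 : ∀ n : ℤ, (∫ z, ((starRingEnd ℂ) z) ^ n * g z ∂mT) = 0) : g =ᵐ[mT] 0 := by
  have hme : AEMeasurable eC (AddCircle.haarAddCircle) := eC_cont.measurable.aemeasurable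
  have hgm : AEStronglyMeasurable g mT := hg.aestronglyMeasurable
  have hg2 : MemLp (g ∘ eC) 2 (AddCircle.haarAddCircle) :=
    (memLp_map_measure_iff (mT_eq_map ▸ hgm) hme).1 (mT_eq_map ▸ hg)
  -- Fourier coefficients of g ∘ eC vanish
  have hfc : ∀ n : ℤ, fourierCoeff (g ∘ eC) n = 0 := by
    intro n
    have : fourierCoeff (g ∘ eC) n = ∫ x, (eC x) ^ (-n) * g (eC x) ∂AddCircle.haarAddCircle := by
      rw [fourierCoeff]
      congr 1; funext x
      rw [fourier_eq_eC_zpow, smul_eq_mul]; rfl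
    rw [this]
    have hms : AEStronglyMeasurable (fun z : ℂ => z ^ (-n) * g z) mT :=
      ((meas_zpow (-n)).aestronglyMeasurable.mul hgm)
    rw [show (∫ x, (eC x) ^ (-n) * g (eC x) ∂AddCircle.haarAddCircle)
        = ∫ z, z ^ (-n) * g z ∂(Measure.map eC AddCircle.haarAddCircle) from
      (integral_map hme (mT_eq_map ▸ hms)).symm]
    rw [← mT_eq_map]
    rw [show (∫ z, z ^ (-n) * g z ∂mT) = ∫ z, ((starRingEnd ℂ) z) ^ n * g z ∂mT from ?_]
    · exact h0 n
    · refine integral_congr_ae (mT_ae_abs.mono fun z hz => ?_)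
      show z ^ (-n) * g z = ((starRingEnd ℂ) z) ^ n * g z
      have hz0 : z ≠ 0 := by
        intro h; rw [h] at hz; simp at hz
      have hconj : (starRingEnd ℂ) z = z⁻¹ := by
        have := Complex.mul_conj z
        rw [Complex.normSq_eq_norm_sq, hz] at this
        field_simp [hz0]
        rw [mul_comm]
        simpa using this
      rw [hconj, inv_zpow, ← zpow_neg]
  -- conclude g ∘ eC = 0 a.e.
  have hae : (↑(hg2.toLp (g ∘ eC)) : AddCircle (2*Real.pi) → ℂ) =ᵐ[AddCircle.haarAddCircle] g ∘ eC :=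
    hg2.coeFn_toLp
  have hrepr : fourierBasis.repr (hg2.toLp (g ∘ eC)) = 0 := by
    ext n
    rw [fourierBasis_repr]
    have : fourierCoeff (↑(hg2.toLp (g ∘ eC)) : AddCircle (2*Real.pi) → ℂ) n
        = fourierCoeff (g ∘ eC) n := by
      unfold fourierCoeff
      exact integral_congr_ae (hae.mono fun x hx => by dsimp only; rw [hx])
    simp [this, hfc n]
  have hG0 : hg2.toLp (g ∘ eC) = 0 := by
    have := fourierBasis.repr.map_eq_zero_iff (x := hg2.toLp (g ∘ eC))
    exact this.1 hrepr
  have hgeC : g ∘ eC =ᵐ[AddCircle.haarAddCircle] 0 := by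
    refine hae.symm.trans ?_
    rw [hG0]
    exact Lp.coeFn_zero _ _ _
  -- transfer back
  set g' := hgm.mk g with hg'
  have hgg' : g =ᵐ[mT] g' := hgm.ae_eq_mk
  have hgg2 : g =ᵐ[Measure.map eC AddCircle.haarAddCircle] g' := by
    rw [← mT_eq_map]; exact hgg'
  have h1 : ∀ᵐ x ∂AddCircle.haarAddCircle, g (eC x) = g' (eC x) :=
    ae_of_ae_map (p := fun y => g y = g' y) hme hgg2
  have h2 : ∀ᵐ x ∂AddCircle.haarAddCircle, g' (eC x) = 0 := by
    filter_upwards [h1, hgeC] with x hx1 hx2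
    rw [← hx1]
    exact hx2
  have h3 : ∀ᵐ z ∂mT, g' z = 0 := by
    rw [mT_eq_map]
    exact (ae_map_iff (p := fun z => g' z = 0) hme
      (hgm.stronglyMeasurable_mk.measurable (measurableSet_singleton 0))).2 h2
  exact hgg'.trans h3

lemma conj_eq_inv {z : ℂ} (hz : ‖z‖ = 1) : (starRingEnd ℂ) z = z⁻¹ := by
  have hz0 : z ≠ 0 := by intro h; rw [h] at hz; simp at hz
  have := Complex.mul_conj z
  rw [Complex.normSq_eq_norm_sq, hz] at this
  field_simp
  rw [mul_comm]
  simpa using this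

lemma ne_zero_of_abs_one {z : ℂ} (hz : ‖z‖ = 1) : z ≠ 0 := by
  intro h; rw [h] at hz; simp at hz

lemma abs_conj_zpow {z : ℂ} (hz : ‖z‖ = 1) (n : ℤ) :
    ‖((starRingEnd ℂ) z) ^ n‖ = 1 := by
  rw [norm_zpow, Complex.norm_conj, hz, one_zpow]

/-- essentially bounded and measurable -/
def EB (f : ℂ → ℂ) : Prop :=
  AEStronglyMeasurable f mT ∧ ∃ C : ℝ, ∀ᵐ z ∂mT, ‖f z‖ ≤ C

lemma EB.integrable {f : ℂ → ℂ} (hf : EB f) : Integrable f mT := by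
  obtain ⟨hm, C, hb⟩ := hf
  exact (integrable_const C).mono' hm hb

lemma EB.memℒp {f : ℂ → ℂ} (hf : EB f) : MemLp f 2 mT := by
  obtain ⟨hm, C, hb⟩ := hf
  exact MemLp.of_bound hm C hb

lemma EB.mul {f g : ℂ → ℂ} (hf : EB f) (hg : EB g) : EB (fun z => f z * g z) := by
  obtain ⟨hm, C, hb⟩ := hf
  obtain ⟨hm', C', hb'⟩ := hg
  refine ⟨hm.mul hm', (max C 0) * (max C' 0), ?_⟩
  filter_upwards [hb, hb'] with z h1 h2
  rw [norm_mul]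
  exact mul_le_mul (h1.trans (le_max_left _ _)) (h2.trans (le_max_left _ _))
    (norm_nonneg _) (le_max_right _ _)

lemma EB.sub {f g : ℂ → ℂ} (hf : EB f) (hg : EB g) : EB (fun z => f z - g z) := by
  obtain ⟨hm, C, hb⟩ := hf
  obtain ⟨hm', C', hb'⟩ := hg
  refine ⟨hm.sub hm', C + C', ?_⟩
  filter_upwards [hb, hb'] with z h1 h2
  exact (norm_sub_le _ _).trans (add_le_add h1 h2)

lemma EB.conj_zpow_mul {f : ℂ → ℂ} (hf : EB f) (n : ℤ) :
    EB (fun z => ((starRingEnd ℂ) z) ^ n * f z) := by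
  obtain ⟨hm, C, hb⟩ := hf
  refine ⟨(meas_conj_zpow n).aestronglyMeasurable.mul hm, max C 0, ?_⟩
  filter_upwards [hb, mT_ae_abs] with z h1 h2
  rw [norm_mul]
  calc ‖((starRingEnd ℂ) z) ^ n‖ * ‖f z‖ = ‖f z‖ := by
        rw [show ‖((starRingEnd ℂ) z) ^ n‖ = 1 from abs_conj_zpow h2 n, one_mul]
    _ ≤ max C 0 := h1.trans (le_max_left _ _)

lemma EB.const (c : ℂ) : EB (fun _ => c) :=
  ⟨aestronglyMeasurable_const, ‖c‖, ae_of_all _ fun _ => le_rfl⟩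

lemma EB.poly (p : Polynomial ℂ) : EB (fun z => p.eval z) := by
  refine ⟨p.continuous_aeval.aestronglyMeasurable, ∑ k ∈ Finset.range (p.natDegree + 1), ‖p.coeff k‖, ?_⟩
  filter_upwards [mT_ae_abs] with z hz
  rw [Polynomial.eval_eq_sum_range]
  refine (norm_sum_le _ _).trans ?_
  refine Finset.sum_le_sum fun k _ => ?_
  rw [norm_mul, norm_pow, hz, one_pow, mul_one]

/-- merging conjugate powers with powers a.e. -/
lemma ae_conj_zpow_mul_pow (n : ℤ) (k : ℕ) :
    ∀ᵐ z ∂mT, ((starRingEnd ℂ) z) ^ n * z ^ (k : ℕ) = ((starRingEnd ℂ) z) ^ (n - (k : ℤ)) := by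
  filter_upwards [mT_ae_abs] with z hz
  have hz0 : z ≠ 0 := ne_zero_of_abs_one hz
  have hc0 : (starRingEnd ℂ) z ≠ 0 := by simpa using hz0
  rw [zpow_sub₀ hc0, conj_eq_inv hz]
  rw [div_eq_mul_inv]
  congr 1
  rw [← inv_zpow, inv_inv, zpow_natCast]

lemma integral_zpow_poly (q : Polynomial ℂ) {f : ℂ → ℂ} (hf : EB f) (n : ℤ) :
    (∫ z, ((starRingEnd ℂ) z) ^ n * (q.eval z * f z) ∂mT)
      = ∑ k ∈ Finset.range (q.natDegree + 1),
          q.coeff k * ∫ z, ((starRingEnd ℂ) z) ^ (n - (k : ℤ)) * f z ∂mT := by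
  have step1 : (∫ z, ((starRingEnd ℂ) z) ^ n * (q.eval z * f z) ∂mT)
      = ∫ z, (∑ k ∈ Finset.range (q.natDegree + 1),
          q.coeff k * (((starRingEnd ℂ) z) ^ (n - (k : ℤ)) * f z)) ∂mT := by
    refine integral_congr_ae ?_
    have hall : ∀ᵐ z ∂mT, ∀ k : ℕ,
        ((starRingEnd ℂ) z) ^ n * z ^ k = ((starRingEnd ℂ) z) ^ (n - (k : ℤ)) :=
      ae_all_iff.2 fun k => ae_conj_zpow_mul_pow n k
    filter_upwards [hall] with z hz
    rw [Polynomial.eval_eq_sum_range, Finset.sum_mul, Finset.mul_sum]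
    refine Finset.sum_congr rfl fun k hk => ?_
    rw [← hz k]
    ring
  rw [step1, integral_finset_sum]
  · refine Finset.sum_congr rfl fun k _ => ?_
    rw [integral_const_mul]
  · intro k _
    exact ((hf.conj_zpow_mul (n - k)).integrable).const_mul _

lemma integral_zpow_poly_only (q : Polynomial ℂ) (n : ℤ) :
    (∫ z, ((starRingEnd ℂ) z) ^ n * q.eval z ∂mT)
      = if 0 ≤ n then q.coeff n.toNat else 0 := by
  have h1 : (∫ z, ((starRingEnd ℂ) z) ^ n * q.eval z ∂mT)
      = ∫ z, ((starRingEnd ℂ) z) ^ n * (q.eval z * (fun _ => (1:ℂ)) z) ∂mT := by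
    simp
  rw [h1, integral_zpow_poly q (EB.const 1) n]
  have h2 : ∀ k : ℕ, (∫ z, ((starRingEnd ℂ) z) ^ (n - (k:ℤ)) * (fun _ => (1:ℂ)) z ∂mT)
      = if n = k then 1 else 0 := by
    intro k
    simp only [mul_one]
    rw [integral_conj_zpow]
    congr 1
    simp [sub_eq_zero]
  simp only [h2]
  by_cases hn : 0 ≤ n
  · simp only [hn, if_true]
    lift n to ℕ using hn with n'
    simp only [Int.toNat_natCast, Nat.cast_inj, Int.natCast_inj]
    by_cases hmem : n' ∈ Finset.range (q.natDegree + 1)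
    · rw [Finset.sum_eq_single n']
      · simp
      · intro k hk hne
        simp [Int.natCast_inj, Ne.symm hne]
      · intro h; exact absurd hmem h
    · rw [Finset.sum_eq_zero, eq_comm]
      · exact q.coeff_eq_zero_of_natDegree_lt (by
          simp only [Finset.mem_range, not_lt] at hmem; omega)
      · intro k hk
        have : n' ≠ k := by
          rintro rfl; exact hmem hk
        simp [Int.natCast_inj, this]
  · simp only [hn, if_false]
    refine Finset.sum_eq_zero fun k _ => ?_
    have : ¬ (n = (k : ℤ)) := by omega
    simp [this]

lemma blaschke_denom_ne {α z : ℂ} (hα : ‖α‖ < 1) (hz : ‖z‖ = 1) :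
    1 - (starRingEnd ℂ) α * z ≠ 0 := by
  intro h
  have h1 : (starRingEnd ℂ) α * z = 1 := by linear_combination -h
  have : ‖(starRingEnd ℂ) α * z‖ = 1 := by rw [h1]; simp
  rw [norm_mul, Complex.norm_conj, hz, mul_one] at this
  rw [this] at hα
  exact lt_irrefl _ hα

lemma blaschke_abs_eq {α z : ℂ} (hα : ‖α‖ < 1) (hz : ‖z‖ = 1) :
    ‖1 - (starRingEnd ℂ) α * z‖ = ‖z - α‖ := by
  have hz0 : z ≠ 0 := ne_zero_of_abs_one hz
  have key : z - α = z * (1 - α * (starRingEnd ℂ) z) := by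
    have : z * (starRingEnd ℂ) z = 1 := by
      rw [Complex.mul_conj, Complex.normSq_eq_norm_sq, hz]; simp
    linear_combination α * this
  calc ‖1 - (starRingEnd ℂ) α * z‖
      = ‖(starRingEnd ℂ) (1 - (starRingEnd ℂ) α * z)‖ := (Complex.norm_conj _).symm
    _ = ‖1 - α * (starRingEnd ℂ) z‖ := by
        congr 1
        simp [map_sub, map_mul]
    _ = ‖z‖ * ‖1 - α * (starRingEnd ℂ) z‖ := by rw [hz, one_mul]
    _ = ‖z - α‖ := by rw [← norm_mul, ← key]

lemma blaschke_abs {α z : ℂ} (hα : ‖α‖ < 1) (hz : ‖z‖ = 1) :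
    ‖blaschke α z‖ = 1 := by
  have hden := blaschke_denom_ne hα hz
  have hne : ‖z - α‖ ≠ 0 := by
    intro h
    rw [← blaschke_abs_eq hα hz] at h
    exact hden (by rwa [norm_eq_zero] at h)
  rw [blaschke, norm_div, blaschke_abs_eq hα hz, div_self hne]

lemma blaschke_measurable (α : ℂ) : Measurable (blaschke α) := by
  unfold blaschke
  apply Measurable.div
  · exact (measurable_id.sub_const α)
  · exact (measurable_const.sub ((measurable_const.mul measurable_id)))


open scoped InnerProductSpace

/-- Let `Φ ∈ H^∞(𝕋, M_{m×n})` be matrix-valued and rational in the sense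
that `θ H²(𝕋, ℂᵐ) ⊆ ker H_{Φ*}` for a finite Blaschke product `θ`. Then every entry can be
written `φ_ij = θ ⬝ conj(a_ij)` with `a_ij ∈ H^∞(𝕋)`; in particular each entry is a
rational function. -/
theorem entries_of_rational_matrix_function_are_rational (m n : ℕ)
    (Φ : ℂ → EuclideanSpace ℂ (Fin n) →L[ℂ] EuclideanSpace ℂ (Fin m))
    (hΦ : MemHinf Φ) (θ : ℂ → ℂ) (hθ : IsFiniteBlaschkeProd θ)
    (hsub : ∀ f : ℂ → EuclideanSpace ℂ (Fin m), MemH2 f →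
      MemH2 (fun z => θ z • f z) ∧
      MemH2 (fun z => θ z • (ContinuousLinearMap.adjoint (Φ z)) (f z))) :
    ∀ (i : Fin m) (j : Fin n),
      (∃ a : ℂ → ℂ, MemHinfScalar a ∧
        ∀ᵐ z ∂mT, Φ z (EuclideanSpace.single j 1) i = θ z * (starRingEnd ℂ) (a z)) ∧
      (∃ p q : Polynomial ℂ, q ≠ 0 ∧
        ∀ᵐ z ∂mT, Φ z (EuclideanSpace.single j 1) i = p.eval z / q.eval z) := by
  obtain ⟨M, α, hα, hθeq⟩ := hθ
  obtain ⟨r, hr⟩ := hΦ.bdd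
  intro i j
  set ej : EuclideanSpace ℂ (Fin n) := EuclideanSpace.single j 1 with hej
  set ei : EuclideanSpace ℂ (Fin m) := EuclideanSpace.single i 1 with hei
  set φ : ℂ → ℂ := fun z => Φ z ej i with hφdef
  -- θ basics
  have hθmeas : Measurable θ := by
    have hfe : θ = fun z => ∏ k, blaschke (α k) z := funext hθeq
    rw [hfe]
    exact Finset.measurable_prod _ fun k _ => blaschke_measurable (α k)
  have hθabs : ∀ᵐ z ∂mT, ‖θ z‖ = 1 := by
    filter_upwards [mT_ae_abs] with z hz
    rw [hθeq z, norm_prod]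
    exact Finset.prod_eq_one fun k _ => blaschke_abs (hα k) hz
  have hθEB : EB θ := ⟨hθmeas.aestronglyMeasurable, 1,
    hθabs.mono fun z hz => by rw [hz]⟩
  -- φ basics
  have hφinner : ∀ v : EuclideanSpace ℂ (Fin m), v i = ⟪ei, v⟫_ℂ := by
    intro v
    rw [hei, EuclideanSpace.inner_single_left]
    simp
  have hφm : AEStronglyMeasurable φ mT := by
    have h1 : AEStronglyMeasurable (fun z => (innerSL ℂ ei) (Φ z ej)) mT :=
      (innerSL ℂ ei).continuous.comp_aestronglyMeasurable (hΦ.meas ej)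
    refine h1.congr (ae_of_all _ fun z => ?_)
    rw [hφdef]
    exact (hφinner (Φ z ej)).symm
  have hφbdd : ∀ᵐ z ∂mT, ‖φ z‖ ≤ r := by
    filter_upwards [hr] with z hz
    calc ‖φ z‖ = ‖⟪ei, Φ z ej⟫_ℂ‖ := congrArg norm (hφinner (Φ z ej))
      _ ≤ ‖ei‖ * ‖Φ z ej‖ := norm_inner_le_norm _ _
      _ = ‖Φ z ej‖ := by rw [hei, EuclideanSpace.norm_single]; simp
      _ ≤ ‖Φ z‖ * ‖ej‖ := (Φ z).le_opNorm ej
      _ = ‖Φ z‖ := by rw [hej, EuclideanSpace.norm_single]; simp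
      _ ≤ r := hz
  have hφEB : EB φ := ⟨hφm, r, hφbdd⟩
  have hφneg : ∀ n' : ℤ, n' < 0 → (∫ z, ((starRingEnd ℂ) z) ^ n' * φ z ∂mT) = 0 := by
    intro n' hn'
    have hint : Integrable (fun z => ((starRingEnd ℂ) z) ^ n' • Φ z ej) mT := by
      refine (integrable_const r).mono'
        ((meas_conj_zpow n').aestronglyMeasurable.smul (hΦ.meas ej)) ?_
      filter_upwards [hr, mT_ae_abs] with z h1 h2
      rw [norm_smul, abs_conj_zpow h2, one_mul]
      calc ‖Φ z ej‖ ≤ ‖Φ z‖ * ‖ej‖ := (Φ z).le_opNorm ej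
        _ = ‖Φ z‖ := by rw [hej, EuclideanSpace.norm_single]; simp
        _ ≤ r := h1
    have h0 : fc Φ n' ej = 0 := hΦ.neg n' hn' ej
    calc (∫ z, ((starRingEnd ℂ) z) ^ n' * φ z ∂mT)
        = ∫ z, ⟪ei, ((starRingEnd ℂ) z) ^ n' • Φ z ej⟫_ℂ ∂mT := by
          refine integral_congr_ae (ae_of_all _ fun z => ?_)
          show ((starRingEnd ℂ) z) ^ n' * φ z = ⟪ei, ((starRingEnd ℂ) z) ^ n' • Φ z ej⟫_ℂ
          rw [inner_smul_right, ← hφinner (Φ z ej)]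
      _ = ⟪ei, (∫ z, ((starRingEnd ℂ) z) ^ n' • Φ z ej ∂mT)⟫_ℂ := integral_inner hint ei
      _ = ⟪ei, fc Φ n' ej⟫_ℂ := rfl
      _ = 0 := by rw [h0]; simp
  -- the H² function g = θ · Φ* eᵢ
  have hconstH2 : MemH2 (fun _ : ℂ => ei) := by
    constructor
    · exact memLp_const ei
    · intro n' hn'
      show (∫ z, ((starRingEnd ℂ) z) ^ n' • ei ∂mT) = 0
      rw [integral_smul_const, integral_conj_zpow, if_neg (by omega), zero_smul]
  obtain ⟨hgL2, hgneg⟩ := (hsub (fun _ => ei) hconstH2).2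
  set g : ℂ → EuclideanSpace ℂ (Fin n) :=
    fun z => θ z • (ContinuousLinearMap.adjoint (Φ z)) ei with hgdef
  set a : ℂ → ℂ := fun z => θ z * (starRingEnd ℂ) (φ z) with hadef
  have hag : ∀ z, a z = ⟪ej, g z⟫_ℂ := by
    intro z
    rw [hgdef]
    simp only [inner_smul_right]
    rw [ContinuousLinearMap.adjoint_inner_right, hei, EuclideanSpace.inner_single_right]
    rw [hadef, hφdef]
    simp
  have haEB : EB a := by
    refine hθEB.mul ⟨Complex.continuous_conj.comp_aestronglyMeasurable hφm, r, ?_⟩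
    filter_upwards [hφbdd] with z hz
    simpa using hz
  have haneg : ∀ n' : ℤ, n' < 0 → (∫ z, ((starRingEnd ℂ) z) ^ n' * a z ∂mT) = 0 := by
    intro n' hn'
    have hgi : Integrable g mT := hgL2.integrable one_le_two
    have hint : Integrable (fun z => ((starRingEnd ℂ) z) ^ n' • g z) mT := by
      refine hgi.norm.mono' ((meas_conj_zpow n').aestronglyMeasurable.smul
        hgL2.aestronglyMeasurable) ?_
      filter_upwards [mT_ae_abs] with z h2
      rw [norm_smul, abs_conj_zpow h2, one_mul]
    have h0 : vfc g n' = 0 := hgneg n' hn'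
    calc (∫ z, ((starRingEnd ℂ) z) ^ n' * a z ∂mT)
        = ∫ z, ⟪ej, ((starRingEnd ℂ) z) ^ n' • g z⟫_ℂ ∂mT := by
          refine integral_congr_ae (ae_of_all _ fun z => ?_)
          show ((starRingEnd ℂ) z) ^ n' * a z = ⟪ej, ((starRingEnd ℂ) z) ^ n' • g z⟫_ℂ
          rw [inner_smul_right, ← hag z]
      _ = ⟪ej, (∫ z, ((starRingEnd ℂ) z) ^ n' • g z ∂mT)⟫_ℂ := integral_inner hint ej
      _ = ⟪ej, vfc g n'⟫_ℂ := rfl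
      _ = 0 := by rw [h0]; simp
  have hMemHinfa : MemHinfScalar a := ⟨haEB.1, haEB.2, haneg⟩
  have hpart1 : ∀ᵐ z ∂mT, φ z = θ z * (starRingEnd ℂ) (a z) := by
    filter_upwards [hθabs] with z h1
    have hmc : θ z * (starRingEnd ℂ) (θ z) = 1 := by
      rw [Complex.mul_conj, Complex.normSq_eq_norm_sq, h1]; simp
    calc φ z = (θ z * (starRingEnd ℂ) (θ z)) * φ z := by rw [hmc, one_mul]
      _ = θ z * (starRingEnd ℂ) (a z) := by
          have hca : (starRingEnd ℂ) (a z) = (starRingEnd ℂ) (θ z) * φ z := by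
            rw [hadef]
            simp only [map_mul, Complex.conj_conj]
          rw [hca]
          ring
  refine ⟨⟨a, hMemHinfa, hpart1⟩, ?_⟩
  -- Part 2: rationality
  classical
  set P : Polynomial ℂ := ∏ k, (Polynomial.X - Polynomial.C (α k)) with hPdef
  set Q : Polynomial ℂ := ∏ k, (1 - Polynomial.C ((starRingEnd ℂ) (α k)) * Polynomial.X) with hQdef
  have hQeval : ∀ z : ℂ, Q.eval z = ∏ k, (1 - (starRingEnd ℂ) (α k) * z) := by
    intro z
    rw [hQdef, Polynomial.eval_prod]
    refine Finset.prod_congr rfl fun k _ => ?_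
    simp
  have hPeval : ∀ z : ℂ, P.eval z = ∏ k, (z - α k) := by
    intro z
    rw [hPdef, Polynomial.eval_prod]
    refine Finset.prod_congr rfl fun k _ => ?_
    simp
  have hQne : ∀ z : ℂ, ‖z‖ = 1 → Q.eval z ≠ 0 := by
    intro z hz
    rw [hQeval]
    exact Finset.prod_ne_zero_iff.2 fun k _ => blaschke_denom_ne (hα k) hz
  have hθQP : ∀ z : ℂ, ‖z‖ = 1 → θ z * Q.eval z = P.eval z := by
    intro z hz
    rw [hQeval, hPeval, hθeq z, ← Finset.prod_mul_distrib]
    refine Finset.prod_congr rfl fun k _ => ?_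
    rw [blaschke, div_mul_cancel₀ _ (blaschke_denom_ne (hα k) hz)]
  have hQ0 : Q ≠ 0 := by
    intro h
    have h1 : Q.eval 0 = 1 := by
      rw [hQeval]; simp
    rw [h] at h1
    simp at h1
  set h : ℂ → ℂ := fun z => Q.eval z * φ z with hhdef
  have hhEB : EB h := (EB.poly Q).mul hφEB
  set ca : ℂ → ℂ := fun z => (starRingEnd ℂ) (a z) with hcadef
  have hcaEB : EB ca := by
    obtain ⟨hm, C, hb⟩ := haEB
    refine ⟨Complex.continuous_conj.comp_aestronglyMeasurable hm, C,
      hb.mono fun z hz => ?_⟩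
    show ‖(starRingEnd ℂ) (a z)‖ ≤ C
    rw [Complex.norm_conj]
    exact hz
  have hcapos : ∀ m' : ℤ, 0 < m' → (∫ z, ((starRingEnd ℂ) z) ^ m' * ca z ∂mT) = 0 := by
    intro m' hm'
    have h1 : (∫ z, ((starRingEnd ℂ) z) ^ m' * ca z ∂mT)
        = (starRingEnd ℂ) (∫ z, z ^ m' * a z ∂mT) := by
      rw [← integral_conj]
      refine integral_congr_ae (ae_of_all _ fun z => ?_)
      rw [hcadef]
      simp only [map_mul, map_zpow₀]
    have h2 : (∫ z, z ^ m' * a z ∂mT) = ∫ z, ((starRingEnd ℂ) z) ^ (-m') * a z ∂mT := by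
      refine integral_congr_ae ?_
      filter_upwards [mT_ae_abs] with z hz
      have : ((starRingEnd ℂ) z) ^ (-m') = z ^ m' := by
        rw [conj_eq_inv hz, inv_zpow, ← zpow_neg, neg_neg]
      rw [this]
    rw [h1, h2, haneg (-m') (by omega)]
    simp
  set c : ℕ → ℂ := fun k => ∫ z, ((starRingEnd ℂ) z) ^ (k : ℤ) * h z ∂mT with hcdef
  set p : Polynomial ℂ := ∑ k ∈ Finset.range (P.natDegree + 1),
    Polynomial.C (c k) * Polynomial.X ^ k with hpdef
  have hpcoeff : ∀ t : ℕ, p.coeff t = if t ∈ Finset.range (P.natDegree + 1) then c t else 0 := by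
    intro t
    rw [hpdef, Polynomial.finset_sum_coeff]
    rw [Finset.sum_congr rfl fun k _ => Polynomial.coeff_C_mul_X_pow (c k) k t]
    exact Finset.sum_ite_eq _ t c
  have hhneg : ∀ n' : ℤ, n' < 0 → (∫ z, ((starRingEnd ℂ) z) ^ n' * h z ∂mT) = 0 := by
    intro n' hn'
    rw [hhdef]
    rw [integral_zpow_poly Q hφEB n']
    refine Finset.sum_eq_zero fun k _ => ?_
    rw [hφneg (n' - k) (by omega)]
    simp
  have hhPca : ∀ᵐ z ∂mT, h z = P.eval z * ca z := by
    filter_upwards [hpart1, mT_ae_abs] with z h1 h2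
    rw [hhdef, hcadef]
    show Q.eval z * φ z = P.eval z * (starRingEnd ℂ) (a z)
    rw [h1, ← hθQP z h2]
    ring
  have hhbig : ∀ n' : ℤ, (P.natDegree : ℤ) < n' →
      (∫ z, ((starRingEnd ℂ) z) ^ n' * h z ∂mT) = 0 := by
    intro n' hn'
    have heq : (∫ z, ((starRingEnd ℂ) z) ^ n' * h z ∂mT)
        = ∫ z, ((starRingEnd ℂ) z) ^ n' * (P.eval z * ca z) ∂mT := by
      refine integral_congr_ae ?_
      filter_upwards [hhPca] with z hz
      rw [hz]
    rw [heq, integral_zpow_poly P hcaEB n']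
    refine Finset.sum_eq_zero fun k hk => ?_
    rw [Finset.mem_range] at hk
    rw [hcapos (n' - k) (by omega)]
    simp
  have hhp : h =ᵐ[mT] fun z => p.eval z := by
    have hdiff := mT_ext ((hhEB.sub (EB.poly p)).memℒp) ?_
    · have : ∀ᵐ z ∂mT, h z - p.eval z = 0 := hdiff
      filter_upwards [this] with z hz
      have := sub_eq_zero.1 hz
      exact this
    · intro n'
      have hsplit : (∫ z, ((starRingEnd ℂ) z) ^ n' * (h z - p.eval z) ∂mT)
          = (∫ z, ((starRingEnd ℂ) z) ^ n' * h z ∂mT)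
            - ∫ z, ((starRingEnd ℂ) z) ^ n' * p.eval z ∂mT := by
        rw [← integral_sub ((hhEB.conj_zpow_mul n').integrable)
          (((EB.poly p).conj_zpow_mul n').integrable)]
        refine integral_congr_ae (ae_of_all _ fun z => ?_)
        ring
      rw [hsplit, integral_zpow_poly_only p n']
      by_cases hn : n' < 0
      · rw [hhneg n' hn, if_neg (by omega)]
        simp
      · push_neg at hn
        rw [if_pos hn]
        by_cases hbig : (P.natDegree : ℤ) < n'
        · rw [hhbig n' hbig, hpcoeff, if_neg (by
            rw [Finset.mem_range]
            omega), sub_zero]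
        · push_neg at hbig
          rw [hpcoeff, if_pos (by rw [Finset.mem_range]; omega)]
          have hc' : c n'.toNat = ∫ z, ((starRingEnd ℂ) z) ^ n' * h z ∂mT := by
            have ht : (n'.toNat : ℤ) = n' := by omega
            rw [hcdef]
            simp only [ht]
          rw [hc', sub_self]
  refine ⟨p, Q, hQ0, ?_⟩
  filter_upwards [hhp, mT_ae_abs] with z h1 h2
  have hq := hQne z h2
  show φ z = p.eval z / Q.eval z
  rw [← h1, hhdef]
  show φ z = Q.eval z * φ z / Q.eval z
  rw [mul_comm, mul_div_assoc, div_self hq, mul_one]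


end
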